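/- Let m ≥ 3 be an odd integer and let p, p+2 be a pair of twin primes, and write q = p + 2. Then either ±2^{(p−1)/2}·(1 + √(1 − 2m^p)) is not a p-th power of any element of the ring of integers of ℚ(√(1 − 2m^p)), or ±2^{(q−1)/2}·(1 + √(1 − 2m^q)) is not a q-th power of any element of the ring of integers of ℚ(√(1 − 2m^q)). (Here '±γ is not an n-th power' means that neither γ nor −γ equals β^n for any β in the relevant ring of integers.) -/

import Mathlib

open Polynomial NumberField

/-- A fixed choice of complex square root of the integer `d`. -/
noncomputable def sqrtC (d : ℤ) : ℂ := (d : ℂ) ^ ((1 : ℂ) / 2)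

lemma sqrtC_sq (d : ℤ) : sqrtC d ^ 2 = (d : ℂ) := by
  unfold sqrtC
  rcases eq_or_ne (d : ℂ) 0 with h | h
  · rw [h, Complex.zero_cpow (by norm_num : (1 : ℂ) / 2 ≠ 0)]
    simp
  · rw [pow_two, ← Complex.cpow_add _ _ h]
    norm_num

lemma isIntegral_sqrtC (d : ℤ) : IsIntegral ℚ (sqrtC d) := by
  refine ⟨X ^ 2 - C (d : ℚ), monic_X_pow_sub_C _ two_ne_zero, ?_⟩
  have : (Polynomial.aeval (sqrtC d)) (X ^ 2 - C (d : ℚ)) = 0 := by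
    simp [sqrtC_sq]
  simpa [Polynomial.aeval_def] using this

/-- The (number) field `ℚ(√d)`, realized as a subfield of `ℂ`. -/
noncomputable def Qsqrt (d : ℤ) : IntermediateField ℚ ℂ :=
  IntermediateField.adjoin ℚ {sqrtC d}

instance (d : ℤ) : FiniteDimensional ℚ (Qsqrt d) :=
  IntermediateField.adjoin.finiteDimensional (isIntegral_sqrtC d)

instance (d : ℤ) : NumberField (Qsqrt d) := ⟨⟩

/-- The element `√d` of `ℚ(√d)`. -/
noncomputable def sqrtElem (d : ℤ) : Qsqrt d :=
  ⟨sqrtC d, IntermediateField.mem_adjoin_simple_self ℚ (sqrtC d)⟩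

lemma oddsq_mod4 (P : ℤ) (h : P % 2 = 1) : P ^ 2 % 4 = 1 := by
  obtain ⟨k, rfl⟩ : ∃ k, P = 2 * k + 1 := ⟨P / 2, by omega⟩
  have h2 : (2 * k + 1) ^ 2 = 1 + (k ^ 2 + k) * 4 := by ring
  obtain ⟨n, hn⟩ : ∃ n, (2 * k + 1) ^ 2 = 1 + n * 4 := ⟨k ^ 2 + k, by ring⟩
  omega

lemma rat_integral_int (x : ℚ) (h : IsIntegral ℤ ((x : ℂ))) : ∃ T : ℤ, (T : ℚ) = x := by
  have h2 : IsIntegral ℤ x := by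
    have hinj : Function.Injective ⇑((algebraMap ℚ ℂ).toIntAlgHom) :=
      (algebraMap ℚ ℂ).injective
    exact (isIntegral_algHom_iff ((algebraMap ℚ ℂ).toIntAlgHom) hinj).mp h
  exact IsIntegrallyClosed.isIntegral_iff.mp h2

lemma conj_sqrtC (d : ℤ) (hd : d < 0) : (starRingEnd ℂ) (sqrtC d) = - sqrtC d := by
  have hs2 := sqrtC_sq d
  have h1 : ((starRingEnd ℂ) (sqrtC d)) ^ 2 = (d : ℂ) := by
    rw [← map_pow, hs2, map_intCast]
  have h0 : ((starRingEnd ℂ) (sqrtC d) - sqrtC d) *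
      ((starRingEnd ℂ) (sqrtC d) + sqrtC d) = 0 := by
    have : ((starRingEnd ℂ) (sqrtC d)) ^ 2 - (sqrtC d) ^ 2 = 0 := by rw [h1, hs2]; ring
    linear_combination this
  rcases mul_eq_zero.mp h0 with h | h
  · exfalso
    have hcs : (starRingEnd ℂ) (sqrtC d) = sqrtC d := by linear_combination h
    have hre : ((sqrtC d).re : ℂ) = sqrtC d := Complex.conj_eq_iff_re.mp hcs
    have hD : ((d : ℝ) : ℂ) = (((sqrtC d).re ^ 2 : ℝ) : ℂ) := by
      push_cast
      rw [← hs2, hre]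
    have hDr : (d : ℝ) = (sqrtC d).re ^ 2 := Complex.ofReal_inj.mp hD
    have : (d : ℝ) < 0 := by exact_mod_cast hd
    nlinarith [sq_nonneg (sqrtC d).re]
  · linear_combination h

lemma mem_repr (d : ℤ) (z : Qsqrt d) :
    ∃ x y : ℚ, (z : ℂ) = (x : ℂ) + (y : ℂ) * sqrtC d := by
  have hs2 := sqrtC_sq d
  let Sub : Subalgebra ℚ ℂ :=
  { carrier := {w | ∃ x y : ℚ, w = (x : ℂ) + (y : ℂ) * sqrtC d}
    mul_mem' := by
      rintro w1 w2 ⟨x1, y1, rfl⟩ ⟨x2, y2, rfl⟩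
      exact ⟨x1 * x2 + y1 * y2 * (d : ℚ), x1 * y2 + y1 * x2, by
        push_cast
        linear_combination (y1 : ℂ) * (y2 : ℂ) * hs2⟩
    add_mem' := by
      rintro w1 w2 ⟨x1, y1, rfl⟩ ⟨x2, y2, rfl⟩
      exact ⟨x1 + x2, y1 + y2, by push_cast; ring⟩
    algebraMap_mem' := fun q => ⟨q, 0, by simp [eq_ratCast]⟩ }
  have htsub : (Qsqrt d).toSubalgebra = Algebra.adjoin ℚ {sqrtC d} :=
    IntermediateField.adjoin_simple_toSubalgebra_of_isAlgebraic (isIntegral_sqrtC d).isAlgebraic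
  have hz : (z : ℂ) ∈ Algebra.adjoin ℚ {sqrtC d} := by
    rw [← htsub]
    exact z.2
  have hle : Algebra.adjoin ℚ {sqrtC d} ≤ Sub := by
    apply Algebra.adjoin_le
    rintro w hw
    rw [Set.mem_singleton_iff] at hw
    subst hw
    exact ⟨0, 1, by push_cast; ring⟩
  exact hle hz

lemma coe_sqrtElem (d : ℤ) : ((sqrtElem d : Qsqrt d) : ℂ) = sqrtC d := rfl

lemma coe_two (d : ℤ) : (((2 : Qsqrt d)) : ℂ) = 2 := rfl

lemma key (m : ℤ) (hm : 3 ≤ m) (hmodd : Odd m) (r : ℕ) (hrodd : Odd r) (hr3 : 3 ≤ r)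
    (h : ∃ β : 𝓞 (Qsqrt (1 - 2 * m ^ r)),
        (β : Qsqrt (1 - 2 * m ^ r)) ^ r =
            2 ^ ((r - 1) / 2) * (1 + sqrtElem (1 - 2 * m ^ r)) ∨
        (β : Qsqrt (1 - 2 * m ^ r)) ^ r =
            -(2 ^ ((r - 1) / 2) * (1 + sqrtElem (1 - 2 * m ^ r)))) :
    ∃ k : ℤ, (2 * m - 1) * (2 * m ^ r - 1) = k ^ 2 := by
  obtain ⟨β, hβ⟩ := h
  obtain ⟨k0, hk0⟩ := hrodd
  have hrodd' : Odd r := ⟨k0, hk0⟩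
  have hkk : (r - 1) / 2 = k0 := by omega
  rw [hkk] at hβ
  have hm1 : (1 : ℤ) ≤ m := by linarith
  have hmr : 3 ≤ m ^ r := le_trans hm (le_self_pow₀ hm1 (by omega))
  have hmrodd : Odd (m ^ r) := hmodd.pow
  have hD : 1 - 2 * m ^ r < 0 := by linarith
  have hD4 : (1 - 2 * m ^ r) % 4 = 3 := by
    obtain ⟨w, hw⟩ := hmrodd
    rw [hw]; omega
  have hDodd : (1 - 2 * m ^ r) % 2 = 1 := by omega
  have hs2 : sqrtC (1 - 2 * m ^ r) ^ 2 = ((1 - 2 * m ^ r : ℤ) : ℂ) := sqrtC_sq _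
  have hconj : (starRingEnd ℂ) (sqrtC (1 - 2 * m ^ r)) = - sqrtC (1 - 2 * m ^ r) :=
    conj_sqrtC _ hD
  set s : ℂ := sqrtC (1 - 2 * m ^ r) with hsdef
  set b : ℂ := ((β : Qsqrt (1 - 2 * m ^ r)) : ℂ) with hbdef
  obtain ⟨ε, hε, hbr⟩ : ∃ ε : ℤ, (ε = 1 ∨ ε = -1) ∧
      b ^ r = (ε : ℂ) * 2 ^ k0 * (1 + s) := by
    rcases hβ with h1 | h1
    · refine ⟨1, Or.inl rfl, ?_⟩
      have h2 := congrArg (fun z : Qsqrt (1 - 2 * m ^ r) => (z : ℂ)) h1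
      push_cast at h2
      rw [coe_sqrtElem, coe_two] at h2
      rw [hbdef, h2]
      push_cast
      ring
    · refine ⟨-1, Or.inr rfl, ?_⟩
      have h2 := congrArg (fun z : Qsqrt (1 - 2 * m ^ r) => (z : ℂ)) h1
      push_cast at h2
      rw [coe_sqrtElem, coe_two] at h2
      rw [hbdef, h2]
      push_cast
      ring
  set bc := (starRingEnd ℂ) b with hbcdef
  have hbcr : bc ^ r = (ε : ℂ) * 2 ^ k0 * (1 - s) := by
    have h2 := congrArg (starRingEnd ℂ) hbr
    rw [map_pow] at h2
    rw [hbcdef, h2, map_mul, map_mul, map_add, map_pow, map_one, map_intCast, map_ofNat, hconj]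
    ring
  obtain ⟨x, y, hxy⟩ := mem_repr (1 - 2 * m ^ r) (β : Qsqrt (1 - 2 * m ^ r))
  rw [← hbdef, ← hsdef] at hxy
  have hbc_xy : bc = (x : ℂ) - (y : ℂ) * s := by
    rw [hbcdef, hxy]
    simp [hconj, sub_eq_add_neg]
  have hbInt : IsIntegral ℤ b := by
    have h1 : IsIntegral ℤ (β : Qsqrt (1 - 2 * m ^ r)) := RingOfIntegers.isIntegral_coe β
    exact h1.map ((Qsqrt (1 - 2 * m ^ r)).val)
  have hbcInt : IsIntegral ℤ bc := hbInt.map ((starRingEnd ℂ).toIntAlgHom)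
  have hsum_rat : b + bc = ((2 * x : ℚ) : ℂ) := by
    rw [hxy, hbc_xy]; push_cast; ring
  obtain ⟨T, hT⟩ := rat_integral_int (2 * x) (by rw [← hsum_rat]; exact hbInt.add hbcInt)
  have hs2' : s ^ 2 = 1 - 2 * (m : ℂ) ^ r := by rw [hs2]; push_cast; ring
  have hprod_rat : b * bc = ((x ^ 2 - y ^ 2 * ((1 - 2 * m ^ r : ℤ) : ℚ) : ℚ) : ℂ) := by
    rw [hxy, hbc_xy]
    push_cast
    linear_combination (-(y : ℂ) ^ 2) * hs2'
  obtain ⟨N, hN⟩ := rat_integral_int _ (by rw [← hprod_rat]; exact hbInt.mul hbcInt)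
  have hNC : (N : ℂ) = b * bc := by
    rw [hprod_rat, ← hN]; norm_cast
  have hε2 : (ε : ℂ) ^ 2 = 1 := by rcases hε with rfl | rfl <;> norm_num
  have hNr' : N ^ r = (2 * m) ^ r := by
    have hNr : ((N ^ r : ℤ) : ℂ) = (((2 * m) ^ r : ℤ) : ℂ) := by
      push_cast
      calc (N : ℂ) ^ r = (b * bc) ^ r := by rw [hNC]
        _ = b ^ r * bc ^ r := by rw [mul_pow]
        _ = ((ε : ℂ) * 2 ^ k0 * (1 + s)) * ((ε : ℂ) * 2 ^ k0 * (1 - s)) := by rw [hbr, hbcr]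
        _ = (ε : ℂ) ^ 2 * ((2 : ℂ) ^ k0 * 2 ^ k0) * (1 - s ^ 2) := by ring
        _ = (2 : ℂ) ^ k0 * 2 ^ k0 * (1 - ((1 - 2 * m ^ r : ℤ) : ℂ)) := by rw [hε2, hs2]; ring
        _ = (2 * (m : ℂ)) ^ r := by push_cast; rw [hk0]; ring
    exact_mod_cast hNr
  have hN2m : N = 2 * m := (Odd.strictMono_pow (R := ℤ) hrodd').injective hNr'
  -- divisibility t ∣ 2^(k0+1)
  have hpowsum : b ^ r + bc ^ r = (ε : ℂ) * 2 ^ (k0 + 1) := by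
    rw [hbr, hbcr]; ring
  obtain ⟨F, hFint, hF⟩ : ∃ F : ℂ, IsIntegral ℤ F ∧
      (ε : ℂ) * 2 ^ (k0 + 1) = (T : ℂ) * F := by
    let A := integralClosure ℤ ℂ
    have h1 : (⟨b, hbInt⟩ : A) + ⟨bc, hbcInt⟩ = ((T : ℤ) : A) := by
      apply Subtype.ext
      push_cast
      rw [hsum_rat, ← hT]
      push_cast
      ring
    have h2 : (⟨b, hbInt⟩ : A) ^ r + (⟨bc, hbcInt⟩ : A) ^ r
        = ((ε * 2 ^ (k0 + 1) : ℤ) : A) := by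
      apply Subtype.ext
      push_cast
      exact hpowsum
    have hdvd : ((T : ℤ) : A) ∣ ((ε * 2 ^ (k0 + 1) : ℤ) : A) := by
      rw [← h1, ← h2]
      exact Odd.add_dvd_pow_add_pow _ _ hrodd'
    obtain ⟨F, hF⟩ := hdvd
    refine ⟨(F : ℂ), F.2, ?_⟩
    have h3 := congrArg (fun z : A => (z : ℂ)) hF
    push_cast at h3
    exact h3
  have hTne : T ≠ 0 := by
    rintro rfl
    rw [Int.cast_zero, zero_mul] at hF
    rcases hε with rfl | rfl <;> push_cast at hF <;> norm_num at hF
  -- F is a rational number, hence an integer, hence T ∣ 2^(k0+1)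
  have hTQne : ((T : ℚ) : ℂ) ≠ 0 := by
    simp only [ne_eq, Complex.ofReal_eq_zero]
    exact_mod_cast fun h => hTne (by exact_mod_cast h)
  obtain ⟨G0, hG0⟩ := rat_integral_int (((ε * 2 ^ (k0 + 1) : ℤ) : ℚ) / ((T : ℤ) : ℚ))
    (by
      have hFG : F = ((((ε * 2 ^ (k0 + 1) : ℤ) : ℚ) / ((T : ℤ) : ℚ) : ℚ) : ℂ) := by
        push_cast
        rw [eq_div_iff (by exact_mod_cast hTne : ((T : ℤ) : ℂ) ≠ 0)]
        linear_combination -hF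
      rw [← hFG]
      exact hFint)
  have hTd : T * G0 = ε * 2 ^ (k0 + 1) := by
    have h1 : ((T : ℤ) : ℚ) * (G0 : ℚ) = ((ε * 2 ^ (k0 + 1) : ℤ) : ℚ) := by
      rw [hG0]
      field_simp
    exact_mod_cast h1
  have hTdvd : T ∣ 2 ^ (k0 + 1) := by
    rcases hε with rfl | rfl
    · exact ⟨G0, by linarith⟩
    · rw [← dvd_neg]
      exact ⟨G0, by linarith⟩
  obtain ⟨e, he, hTe⟩ := (Nat.dvd_prime_pow Nat.prime_two).mp
    (show T.natAbs ∣ 2 ^ (k0 + 1) by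
      have h1 := Int.natAbs_dvd_natAbs.mpr hTdvd
      rw [Int.natAbs_pow] at h1
      exact h1)
  have hT2 : T ^ 2 = 2 ^ (2 * e) := by
    have h1 : (T.natAbs : ℤ) ^ 2 = T ^ 2 := Int.natAbs_sq T
    rw [← h1, hTe]
    push_cast
    ring
  -- the key rational equation
  have hu : 4 * y ^ 2 * ((1 - 2 * m ^ r : ℤ) : ℚ) = ((T : ℤ) : ℚ) ^ 2 - 8 * (m : ℚ) := by
    have hNm : ((N : ℤ) : ℚ) = 2 * (m : ℚ) := by rw [hN2m]; push_cast; ring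
    linear_combination (-(((T : ℤ) : ℚ)) - 2 * x) * hT + 4 * hN - 4 * hNm
  -- clear denominators
  set P : ℤ := y.num with hPdef
  set Q : ℤ := (y.den : ℤ) with hQdef
  have hQpos : 0 < Q := by positivity
  have hQne : Q ≠ 0 := hQpos.ne'
  have hyPQ : y = (P : ℚ) / (Q : ℚ) := (Rat.num_div_den y).symm
  have hZ : 4 * P ^ 2 * (1 - 2 * m ^ r) = (T ^ 2 - 8 * m) * Q ^ 2 := by
    have h1 : 4 * ((P : ℚ) / (Q : ℚ)) ^ 2 * ((1 - 2 * m ^ r : ℤ) : ℚ)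
        = ((T : ℤ) : ℚ) ^ 2 - 8 * (m : ℚ) := by rw [← hyPQ]; exact hu
    have hQQ : ((Q : ℚ)) ≠ 0 := by exact_mod_cast hQne
    have h2 : 4 * (P : ℚ) ^ 2 * (1 - 2 * (m : ℚ) ^ r)
        = (((T : ℤ) : ℚ) ^ 2 - 8 * (m : ℚ)) * (Q : ℚ) ^ 2 := by
      push_cast at h1
      field_simp at h1
      linear_combination h1
    exact_mod_cast h2
  have hcop : Nat.Coprime P.natAbs y.den := y.reduced
  have hnotboth : ¬ (Even P ∧ Even Q) := by
    rintro ⟨⟨P1, hP1⟩, ⟨Q1, hQ1⟩⟩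
    have h2P : 2 ∣ P.natAbs := by
      have h' : (2 : ℤ) ∣ P := ⟨P1, by omega⟩
      have := Int.natAbs_dvd_natAbs.mpr h'
      simpa using this
    have h2Q : 2 ∣ y.den := by
      have h' : (2 : ℤ) ∣ Q := ⟨Q1, by omega⟩
      have := Int.natAbs_dvd_natAbs.mpr h'
      simpa [hQdef] using this
    have := Nat.dvd_gcd h2P h2Q
    rw [Nat.Coprime] at hcop
    rw [hcop] at this
    norm_num at this
  -- case analysis on e
  rcases Nat.lt_or_ge e 2 with he2 | he2
  · interval_cases e
    · -- e = 0 : impossible mod 4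
      exfalso
      rw [pow_zero] at hT2
      rw [hT2] at hZ
      have hZ0 : 4 * P ^ 2 * (1 - 2 * m ^ r) = (1 - 8 * m) * Q ^ 2 := by
        linear_combination hZ
      rcases Int.even_or_odd Q with hQe | hQo
      · obtain ⟨Q1, hQ1⟩ := hQe
        have hPodd : Odd P := by
          rcases Int.even_or_odd P with hPe | hPo
          · exact absurd ⟨hPe, ⟨Q1, hQ1⟩⟩ hnotboth
          · exact hPo
        have hZ1 : P ^ 2 * (1 - 2 * m ^ r) = (1 - 8 * m) * Q1 ^ 2 := by
          have h4 : 4 * (P ^ 2 * (1 - 2 * m ^ r)) = 4 * ((1 - 8 * m) * Q1 ^ 2) := by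
            rw [hQ1] at hZ0
            linear_combination hZ0
          exact mul_left_cancel₀ (by norm_num) h4
        rcases Int.even_or_odd Q1 with hQ1e | hQ1o
        · have hoddL : Odd (P ^ 2 * (1 - 2 * m ^ r)) :=
            (hPodd.pow).mul (Int.odd_iff.mpr hDodd)
          have hevR : Even ((1 - 8 * m) * Q1 ^ 2) := by
            obtain ⟨c, hc⟩ := hQ1e
            rw [hc]
            exact ⟨(1 - 8 * m) * 2 * c ^ 2, by ring⟩
          rw [← hZ1] at hevR
          exact (Int.not_odd_iff_even.mpr hevR) hoddL
        · have h1 : (P ^ 2 * (1 - 2 * m ^ r)) % 4 = 3 := by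
            rw [Int.mul_emod, oddsq_mod4 P (Int.odd_iff.mp hPodd), hD4]
            decide
          have h2 : ((1 - 8 * m) * Q1 ^ 2) % 4 = 1 := by
            rw [Int.mul_emod, oddsq_mod4 Q1 (Int.odd_iff.mp hQ1o)]
            have h3 : (1 - 8 * m) % 4 = 1 := by omega
            rw [h3]
            decide
          rw [hZ1] at h1
          omega
      · -- Q odd : parity contradiction
        have ho8 : Odd (1 - 8 * m) := ⟨-4 * m, by ring⟩
        have hodd : Odd ((1 - 8 * m) * Q ^ 2) := ho8.mul (hQo.pow)
        rw [← hZ0] at hodd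
        have heven : Even (4 * P ^ 2 * (1 - 2 * m ^ r)) :=
          ⟨2 * P ^ 2 * (1 - 2 * m ^ r), by ring⟩
        exact (Int.not_odd_iff_even.mpr heven) hodd
    · -- e = 1 : the main surviving case
      norm_num at hT2
      rw [hT2] at hZ
      have hZ1 : P ^ 2 * (2 * m ^ r - 1) = (2 * m - 1) * Q ^ 2 := by
        have h4 : 4 * (P ^ 2 * (2 * m ^ r - 1)) = 4 * ((2 * m - 1) * Q ^ 2) := by
          linear_combination -hZ
        exact mul_left_cancel₀ (by norm_num) h4
      have hisc : IsCoprime Q P := by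
        apply Int.isCoprime_iff_gcd_eq_one.mpr
        have : Int.gcd P Q = 1 := by
          simp only [Int.gcd, hQdef, Int.natAbs_natCast]
          exact hcop
        rwa [Int.gcd_comm] at this
      have hQ2dvd : Q ^ 2 ∣ 2 * m ^ r - 1 := by
        have hisc2 : IsCoprime (Q ^ 2) (P ^ 2) := hisc.pow
        exact hisc2.dvd_of_dvd_mul_left ⟨2 * m - 1, by linear_combination hZ1⟩
      obtain ⟨w, hw⟩ := hQ2dvd
      have hPw : P ^ 2 * w = 2 * m - 1 := by
        have h5 : Q ^ 2 * (P ^ 2 * w) = Q ^ 2 * (2 * m - 1) := by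
          rw [hw] at hZ1
          linear_combination hZ1
        exact mul_left_cancel₀ (pow_ne_zero 2 hQne) h5
      exact ⟨P * Q * w, by rw [hw, ← hPw]; ring⟩
  · -- e ≥ 2 : impossible by parity
    exfalso
    obtain ⟨j, hj⟩ : ∃ j, e = j + 2 := ⟨e - 2, by omega⟩
    have hZ1 : P ^ 2 * (1 - 2 * m ^ r) = (2 * ((2 : ℤ) ^ (2 * j + 1) - m)) * Q ^ 2 := by
      have h4 : 4 * (P ^ 2 * (1 - 2 * m ^ r)) = 4 * ((2 * ((2 : ℤ) ^ (2 * j + 1) - m)) * Q ^ 2) := by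
        rw [hT2, hj] at hZ
        have hp2 : (2 : ℤ) ^ (2 * (j + 2)) = 8 * 2 ^ (2 * j + 1) := by ring
        rw [hp2] at hZ
        linear_combination hZ
      exact mul_left_cancel₀ (by norm_num) h4
    have hwodd : Odd ((2 : ℤ) ^ (2 * j + 1) - m) := by
      refine Even.sub_odd ?_ hmodd
      exact ⟨2 ^ (2 * j), by ring⟩
    rcases Int.even_or_odd P with hPe | hPo
    · have hQo : Odd Q := by
        rcases Int.even_or_odd Q with hQe | hQo
        · exact absurd ⟨hPe, hQe⟩ hnotboth
        · exact hQo
      obtain ⟨P1, hP1⟩ := hPe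
      have hoddR : Odd (((2 : ℤ) ^ (2 * j + 1) - m) * Q ^ 2) := hwodd.mul (hQo.pow)
      obtain ⟨a, ha⟩ := hoddR
      have h6 : 4 * (P1 ^ 2 * (1 - 2 * m ^ r)) = 2 * (2 * a + 1) := by
        rw [hP1] at hZ1
        linear_combination hZ1 + 2 * ha
      obtain ⟨X, hX⟩ : ∃ X, P1 ^ 2 * (1 - 2 * m ^ r) = X := ⟨_, rfl⟩
      rw [hX] at h6
      omega
    · have hoddL : Odd (P ^ 2 * (1 - 2 * m ^ r)) := (hPo.pow).mul (Int.odd_iff.mpr hDodd)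
      have hevenR : Even ((2 * ((2 : ℤ) ^ (2 * j + 1) - m)) * Q ^ 2) :=
        ⟨((2 : ℤ) ^ (2 * j + 1) - m) * Q ^ 2, by ring⟩
      rw [← hZ1] at hevenR
      exact (Int.not_odd_iff_even.mpr hevenR) hoddL

lemma final_contradiction (m : ℤ) (hm : 3 ≤ m) (p q : ℕ) (hp3 : 3 ≤ p) (hq : q = p + 2)
    (g y z : ℤ) (hg : g = 1 ∨ g = 3) (hy : 0 ≤ y) (hz : 0 ≤ z)
    (hb : 2 * m ^ p - 1 = g * y ^ 2) (hc : 2 * m ^ q - 1 = g * z ^ 2) : False := by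
  have hm1 : (1 : ℤ) ≤ m := by linarith
  have hg1 : (1 : ℤ) ≤ g := by rcases hg with rfl | rfl <;> norm_num
  have hg3 : g ≤ 3 := by rcases hg with rfl | rfl <;> norm_num
  have hmp : 3 ≤ m ^ p := le_trans hm (le_self_pow₀ hm1 (by omega))
  have hqpow : m ^ q = m ^ p * m ^ 2 := by rw [hq, pow_add]
  have hdiff : g * (z ^ 2 - m ^ 2 * y ^ 2) = m ^ 2 - 1 := by
    linear_combination (-1) * hc + m ^ 2 * hb + 2 * hqpow
  have hy1 : 1 ≤ y := by
    rcases (by omega : y = 0 ∨ 1 ≤ y) with rfl | h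
    · exfalso
      norm_num at hb
      linarith
    · exact h
  have hmy : 0 ≤ m * y := mul_nonneg (by linarith) hy
  have hm2 : 9 ≤ m ^ 2 := by nlinarith
  have hzmy : m * y < z := by
    by_contra hcon
    push_neg at hcon
    have h1 : z ^ 2 ≤ (m * y) ^ 2 := pow_le_pow_left₀ hz hcon 2
    have h2 : z ^ 2 - m ^ 2 * y ^ 2 ≤ 0 := by nlinarith [h1]
    have h3 : g * (z ^ 2 - m ^ 2 * y ^ 2) ≤ 0 :=
      mul_nonpos_of_nonneg_of_nonpos (by linarith) h2
    linarith
  have hbound : z + m * y ≤ m ^ 2 - 1 := by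
    have h1 : 1 ≤ z - m * y := by linarith
    have hA : 1 * 1 ≤ g * (z - m * y) := mul_le_mul hg1 h1 (by norm_num) (by linarith)
    have hB : z + m * y ≤ (g * (z - m * y)) * (z + m * y) :=
      le_mul_of_one_le_left (by linarith) (by linarith)
    have hC : (g * (z - m * y)) * (z + m * y) = m ^ 2 - 1 := by linear_combination hdiff
    linarith
  have hzb : z ≤ m ^ 2 - 1 := by linarith
  have hq5 : 5 ≤ q := by omega
  have hmq5 : m ^ 5 ≤ m ^ q := pow_le_pow_right₀ hm1 hq5
  have hz2 : z ^ 2 ≤ (m ^ 2 - 1) ^ 2 := pow_le_pow_left₀ hz hzb 2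
  have hm4 : 81 ≤ m ^ 4 := by nlinarith [hm2]
  have hm54 : 3 * m ^ 4 ≤ m ^ 5 := by
    have h0 : 0 ≤ (m - 3) * m ^ 4 := mul_nonneg (by linarith) (pow_nonneg (by linarith) 4)
    nlinarith [h0]
  have h5 : 2 * m ^ 5 - 1 ≤ g * z ^ 2 := by linarith
  have h6 : g * z ^ 2 ≤ 3 * z ^ 2 := by
    have := mul_nonneg (show (0:ℤ) ≤ 3 - g by linarith) (sq_nonneg z)
    nlinarith [this]
  have e1 : 3 * (m ^ 2 - 1) ^ 2 = 3 * m ^ 4 - 6 * m ^ 2 + 3 := by ring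
  linarith

lemma combine (m : ℤ) (hm : 3 ≤ m) (p q : ℕ) (hp3 : 3 ≤ p) (hpodd : Odd p) (hq : q = p + 2)
    (k₁ k₂ : ℤ) (h₁ : (2 * m - 1) * (2 * m ^ p - 1) = k₁ ^ 2)
    (h₂ : (2 * m - 1) * (2 * m ^ q - 1) = k₂ ^ 2) : False := by
  have hm1 : (1 : ℤ) ≤ m := by linarith
  have hmp : 3 ≤ m ^ p := le_trans hm (le_self_pow₀ hm1 (by omega))
  have hmq : 3 ≤ m ^ q := le_trans hm (le_self_pow₀ hm1 (by omega))
  have hbpos : 0 < 2 * m ^ p - 1 := by linarith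
  have hcpos : 0 < 2 * m ^ q - 1 := by linarith
  have hapos : (0 : ℤ) < 2 * m - 1 := by linarith
  have habc : (2 * m - 1) ^ 2 * ((2 * m ^ p - 1) * (2 * m ^ q - 1)) = (k₁ * k₂) ^ 2 := by
    have h3 := congrArg₂ (· * ·) h₁ h₂
    linear_combination h3
  have hadvd : (2 * m - 1) ∣ k₁ * k₂ := by
    apply (Int.pow_dvd_pow_iff (by norm_num : (2:ℕ) ≠ 0)).mp
    exact ⟨(2 * m ^ p - 1) * (2 * m ^ q - 1), habc.symm⟩
  obtain ⟨L, hL⟩ := hadvd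
  have hbc : (2 * m ^ p - 1) * (2 * m ^ q - 1) = L ^ 2 := by
    have h4 : (2 * m - 1) ^ 2 * ((2 * m ^ p - 1) * (2 * m ^ q - 1))
        = (2 * m - 1) ^ 2 * L ^ 2 := by rw [habc, hL]; ring
    exact mul_left_cancel₀ (pow_ne_zero 2 (by linarith)) h4
  set g : ℕ := Int.gcd (2 * m ^ p - 1) (2 * m ^ q - 1) with hgdef
  have hgb : (g : ℤ) ∣ 2 * m ^ p - 1 := Int.gcd_dvd_left _ _
  have hgc : (g : ℤ) ∣ 2 * m ^ q - 1 := Int.gcd_dvd_right _ _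
  have hgm2 : (g : ℤ) ∣ m ^ 2 - 1 := by
    have heq : m ^ 2 - 1 = (2 * m ^ q - 1) - m ^ 2 * (2 * m ^ p - 1) := by
      rw [hq, pow_add]; ring
    rw [heq]
    exact dvd_sub hgc (Dvd.dvd.mul_left hgb (m ^ 2))
  obtain ⟨j, hj⟩ := hpodd
  have hg2m : (g : ℤ) ∣ 2 * m - 1 := by
    have h1 : (m ^ 2 - 1) ∣ ((m ^ 2) ^ j - 1) := by
      have := sub_dvd_pow_sub_pow (m ^ 2) 1 j
      simpa using this
    have h2 : (g : ℤ) ∣ 2 * m ^ p - 2 * m := by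
      have heq : 2 * m ^ p - 2 * m = 2 * m * ((m ^ 2) ^ j - 1) := by
        rw [hj]; ring
      rw [heq]
      exact Dvd.dvd.mul_left (hgm2.trans h1) (2 * m)
    have heq2 : 2 * m - 1 = (2 * m ^ p - 1) - (2 * m ^ p - 2 * m) := by ring
    rw [heq2]
    exact dvd_sub hgb h2
  have hg3 : (g : ℤ) ∣ 3 := by
    have h1 : (g : ℤ) ∣ 4 * (m ^ 2 - 1) := Dvd.dvd.mul_left hgm2 4
    have h2 : (g : ℤ) ∣ (2 * m - 1) * (2 * m + 1) := Dvd.dvd.mul_right hg2m (2 * m + 1)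
    have heq : (3 : ℤ) = (2 * m - 1) * (2 * m + 1) - 4 * (m ^ 2 - 1) := by ring
    rw [heq]
    exact dvd_sub h2 h1
  have hgnat : g ∣ 3 := by exact_mod_cast hg3
  rcases (Nat.prime_three).eq_one_or_self_of_dvd g hgnat with hg1 | hg3'
  · -- coprime case
    have hco : IsCoprime (2 * m ^ p - 1) (2 * m ^ q - 1) :=
      Int.isCoprime_iff_gcd_eq_one.mpr (by rw [← hgdef]; exact_mod_cast hg1)
    obtain ⟨y0, hy0⟩ := Int.sq_of_isCoprime hco hbc
    obtain ⟨z0, hz0⟩ := Int.sq_of_isCoprime hco.symm (by rw [mul_comm] at hbc; exact hbc)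
    have hb' : 2 * m ^ p - 1 = y0 ^ 2 := by
      rcases hy0 with h | h
      · exact h
      · linarith [sq_nonneg y0]
    have hc' : 2 * m ^ q - 1 = z0 ^ 2 := by
      rcases hz0 with h | h
      · exact h
      · linarith [sq_nonneg z0]
    exact final_contradiction m hm p q hp3 hq 1 |y0| |z0| (Or.inl rfl) (abs_nonneg _)
      (abs_nonneg _) (by rw [one_mul, sq_abs]; exact hb') (by rw [one_mul, sq_abs]; exact hc')
  · -- gcd = 3 case
    have h3b : (3 : ℤ) ∣ 2 * m ^ p - 1 := by
      have h' := hgb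
      rw [hg3'] at h'
      exact_mod_cast h'
    have h3c : (3 : ℤ) ∣ 2 * m ^ q - 1 := by
      have h' := hgc
      rw [hg3'] at h'
      exact_mod_cast h'
    obtain ⟨b1, hb1⟩ := h3b
    obtain ⟨c1, hc1⟩ := h3c
    have h3L : (3 : ℤ) ∣ L := by
      have hp3' : Prime (3 : ℤ) := Int.prime_three
      apply hp3'.dvd_of_dvd_pow (n := 2)
      rw [← hbc, hb1]
      exact ⟨b1 * (2 * m ^ q - 1), by ring⟩
    obtain ⟨L1, hL1⟩ := h3L
    have hbc1 : b1 * c1 = L1 ^ 2 := by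
      have h9 : (9 : ℤ) * (b1 * c1) = 9 * L1 ^ 2 := by
        rw [hb1, hc1, hL1] at hbc
        linear_combination hbc
      exact mul_left_cancel₀ (by norm_num) h9
    have hcop1 : IsCoprime b1 c1 := by
      apply Int.isCoprime_iff_gcd_eq_one.mpr
      have hgg : Int.gcd (3 * b1) (3 * c1) = 3 * Int.gcd b1 c1 := by
        rw [Int.gcd_mul_left]
        norm_num
      rw [← hb1, ← hc1, ← hgdef, hg3'] at hgg
      omega
    obtain ⟨y0, hy0⟩ := Int.sq_of_isCoprime hcop1 hbc1
    obtain ⟨z0, hz0⟩ := Int.sq_of_isCoprime hcop1.symm (by rw [mul_comm] at hbc1; exact hbc1)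
    have hb1pos : 0 < b1 := by linarith [hbpos, hb1]
    have hc1pos : 0 < c1 := by linarith [hcpos, hc1]
    have hb' : b1 = y0 ^ 2 := by
      rcases hy0 with h | h
      · exact h
      · linarith [sq_nonneg y0]
    have hc' : c1 = z0 ^ 2 := by
      rcases hz0 with h | h
      · exact h
      · linarith [sq_nonneg z0]
    exact final_contradiction m hm p q hp3 hq 3 |y0| |z0| (Or.inr rfl) (abs_nonneg _)
      (abs_nonneg _) (by rw [hb1, hb', sq_abs]) (by rw [hc1, hc', sq_abs])

/-- If `m ≥ 3` is odd and `p`, `q = p + 2` are twin primes, then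
`±2 ^ ((p-1)/2) (1 + √(1 - 2 m ^ p))` is not a `p`-th power in the ring of integers of
`ℚ(√(1 - 2 m ^ p))`, or `±2 ^ ((q-1)/2) (1 + √(1 - 2 m ^ q))` is not a `q`-th power in the
ring of integers of `ℚ(√(1 - 2 m ^ q))`. -/
theorem twin_primes_not_pth_power
    (m : ℤ) (hm : 3 ≤ m) (hmodd : Odd m)
    (p q : ℕ) (hp : p.Prime) (hq : q.Prime) (hpq : q = p + 2) :
    (¬ ∃ β : 𝓞 (Qsqrt (1 - 2 * m ^ p)),
        (β : Qsqrt (1 - 2 * m ^ p)) ^ p =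
            2 ^ ((p - 1) / 2) * (1 + sqrtElem (1 - 2 * m ^ p)) ∨
        (β : Qsqrt (1 - 2 * m ^ p)) ^ p =
            -(2 ^ ((p - 1) / 2) * (1 + sqrtElem (1 - 2 * m ^ p)))) ∨
    (¬ ∃ β : 𝓞 (Qsqrt (1 - 2 * m ^ q)),
        (β : Qsqrt (1 - 2 * m ^ q)) ^ q =
            2 ^ ((q - 1) / 2) * (1 + sqrtElem (1 - 2 * m ^ q)) ∨
        (β : Qsqrt (1 - 2 * m ^ q)) ^ q =
            -(2 ^ ((q - 1) / 2) * (1 + sqrtElem (1 - 2 * m ^ q)))) := by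
  by_contra hcon
  push_neg at hcon
  obtain ⟨h1, h2⟩ := hcon
  have hp2 : p ≠ 2 := by
    rintro rfl
    rw [hpq] at hq
    norm_num at hq
  have hpodd : Odd p := hp.odd_of_ne_two hp2
  have hp3 : 3 ≤ p := by have := hp.two_le; omega
  have hqodd : Odd q := by
    obtain ⟨j, hj⟩ := hpodd
    exact ⟨j + 1, by omega⟩
  obtain ⟨k₁, hk₁⟩ := key m hm hmodd p hpodd hp3 h1
  obtain ⟨k₂, hk₂⟩ := key m hm hmodd q hqodd (by omega) h2
  exact combine m hm p q hp3 hpodd hpq k₁ k₂ hk₁ hk₂
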